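/- arXiv:1111.2127 — 7 statements merged into one kernel-verified Lean document; each statement's English description precedes it below -/
import Mathlib

section
/- Let h : 𝒞 → ℝ and let v₁ ∈ V(G) \ {s,t}. Then h(C) = 0 for all cuts C not crossed by the edge s → v₁ (i.e., all cuts with v₁ ∈ L(C)) if and only if h can be written in the form Σ_{V ⊆ V(G)\{s,t,v₁}} c_V (e_V + e_{V ∪ {v₁}}) for some real coefficients c_V. -/
abbrev STCut (V : Type*) (s t : V) := {C : V → Bool // C s = true ∧ C t = false}

def eFun {V : Type*} [DecidableEq V] {s t : V} (W : Finset V) (C : STCut V s t) : ℝ :=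
  (-1 : ℝ) ^ (W.filter (fun v => C.1 v = true)).card

lemma eFun_eq_prod {V : Type*} [DecidableEq V] {s t : V} (W : Finset V) (C : STCut V s t) :
    eFun W C = ∏ v ∈ W, (if C.1 v = true then (-1:ℝ) else 1) := by
  rw [eFun, ← Finset.prod_const, ← Finset.prod_filter]

lemma eFun_insert {V : Type*} [DecidableEq V] {s t v₁ : V} (W : Finset V) (hW : v₁ ∉ W)
    (C : STCut V s t) :
    eFun (insert v₁ W) C = (if C.1 v₁ = true then (-1:ℝ) else 1) * eFun W C := by
  rw [eFun_eq_prod, eFun_eq_prod, Finset.prod_insert hW]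

section Key
variable {V : Type*} [Fintype V] [DecidableEq V] {s t v₁ : V}

lemma filter_eq_powerset (s t v₁ : V) :
    (Finset.univ.filter (fun W : Finset V => s ∉ W ∧ t ∉ W ∧ v₁ ∉ W))
      = (Finset.univ \ {s, t, v₁}).powerset := by
  ext W
  simp only [Finset.mem_filter, Finset.mem_univ, true_and, Finset.mem_powerset,
    Finset.subset_sdiff, Finset.subset_univ, true_and, Finset.disjoint_left,
    Finset.mem_insert, Finset.mem_singleton]
  constructor
  · rintro ⟨h1, h2, h3⟩ a ha (rfl | rfl | rfl) <;> tauto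
  · intro H
    refine ⟨fun hs => H hs (by tauto), fun ht => H ht (by tauto), fun hv => H hv (by tauto)⟩

lemma key_orth (hv₁s : v₁ ≠ s) (hv₁t : v₁ ≠ t)
    (C C₀ : STCut V s t) (hC : C.1 v₁ = false) (hC₀ : C₀.1 v₁ = false) :
    ∑ W ∈ Finset.univ.filter (fun W : Finset V => s ∉ W ∧ t ∉ W ∧ v₁ ∉ W),
      eFun W C * eFun W C₀
      = if C = C₀ then (2:ℝ) ^ (Finset.univ \ ({s, t, v₁} : Finset V)).card else 0 := by
  set S : Finset V := Finset.univ \ {s, t, v₁} with hS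
  rw [filter_eq_powerset]
  have hterm : ∀ W ∈ S.powerset, eFun W C * eFun W C₀ =
      (∏ v ∈ W, ((if C.1 v = true then (-1:ℝ) else 1) * (if C₀.1 v = true then (-1:ℝ) else 1)))
        * ∏ v ∈ S \ W, (1:ℝ) := by
    intro W _
    rw [eFun_eq_prod, eFun_eq_prod, ← Finset.prod_mul_distrib, Finset.prod_const_one, mul_one]
  rw [Finset.sum_congr rfl hterm, ← Finset.prod_add]
  by_cases hCC : C = C₀
  · subst hCC
    rw [if_pos rfl, ← Finset.prod_const]
    refine Finset.prod_congr rfl fun v _ => ?_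
    cases hb : C.1 v <;> simp [hb] <;> norm_num
  · rw [if_neg hCC]
    have : ∃ v, C.1 v ≠ C₀.1 v := by
      by_contra hcon
      push_neg at hcon
      exact hCC (Subtype.ext (funext hcon))
    obtain ⟨v, hv⟩ := this
    have hvS : v ∈ S := by
      simp only [hS, Finset.mem_sdiff, Finset.mem_univ, true_and, Finset.mem_insert,
        Finset.mem_singleton]
      rintro (rfl | rfl | rfl)
      · rw [C.2.1, C₀.2.1] at hv; exact hv rfl
      · rw [C.2.2, C₀.2.2] at hv; exact hv rfl
      · rw [hC, hC₀] at hv; exact hv rfl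
    refine Finset.prod_eq_zero hvS ?_
    cases hb : C.1 v <;> cases hb₀ : C₀.1 v <;> simp_all

end Key

theorem stmt2 {V : Type*} [Fintype V] [DecidableEq V] (s t v₁ : V) (hst : s ≠ t)
    (hv₁s : v₁ ≠ s) (hv₁t : v₁ ≠ t) (h : STCut V s t → ℝ) :
    (∀ C : STCut V s t, C.1 v₁ = true → h C = 0) ↔
      ∃ c : Finset V → ℝ,
        h = ∑ W ∈ Finset.univ.filter (fun W : Finset V => s ∉ W ∧ t ∉ W ∧ v₁ ∉ W),
          c W • ((eFun W : STCut V s t → ℝ) + eFun (insert v₁ W)) := by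
  set S : Finset V := Finset.univ \ {s, t, v₁} with hS
  set F := Finset.univ.filter (fun W : Finset V => s ∉ W ∧ t ∉ W ∧ v₁ ∉ W) with hF
  constructor
  · intro hvan
    set K : ℝ := (2:ℝ) ^ (S.card + 1) with hK
    have hKne : K ≠ 0 := by positivity
    refine ⟨fun W => K⁻¹ * ∑ C : STCut V s t, h C * eFun W C, ?_⟩
    funext C₀
    simp only [Finset.sum_apply, Pi.smul_apply, Pi.add_apply, smul_eq_mul]
    by_cases hC₀ : C₀.1 v₁ = true
    · rw [hvan C₀ hC₀]
      refine (Finset.sum_eq_zero fun W hW => ?_).symm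
      have hv₁W : v₁ ∉ W := by
        rw [hF] at hW; simp only [Finset.mem_filter] at hW; exact hW.2.2.2
      rw [eFun_insert W hv₁W, if_pos hC₀]
      ring
    · have hC₀' : C₀.1 v₁ = false := by simpa using hC₀
      have step1 : ∀ W ∈ F, (K⁻¹ * ∑ C : STCut V s t, h C * eFun W C) *
          (eFun W C₀ + eFun (insert v₁ W) C₀)
          = ∑ C : STCut V s t, K⁻¹ * 2 * (h C * (eFun W C * eFun W C₀)) := by
        intro W hW
        have hv₁W : v₁ ∉ W := by
          rw [hF] at hW; simp only [Finset.mem_filter] at hW; exact hW.2.2.2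
        rw [eFun_insert W hv₁W, if_neg (by simp [hC₀']), one_mul, Finset.mul_sum,
          Finset.sum_mul]
        exact Finset.sum_congr rfl fun C _ => by ring
      rw [Finset.sum_congr rfl step1, Finset.sum_comm]
      have step2 : ∀ C : STCut V s t,
          (∑ W ∈ F, K⁻¹ * 2 * (h C * (eFun W C * eFun W C₀)))
          = K⁻¹ * 2 * h C * ∑ W ∈ F, eFun W C * eFun W C₀ := by
        intro C
        rw [Finset.mul_sum]
        exact Finset.sum_congr rfl fun W _ => by ring
      rw [Finset.sum_congr rfl fun C _ => step2 C]
      rw [Finset.sum_eq_single C₀]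
      · rw [key_orth hv₁s hv₁t C₀ C₀ hC₀' hC₀' , if_pos rfl]
        rw [hK]
        field_simp
        ring
      · intro C _ hne
        by_cases hCv : C.1 v₁ = true
        · rw [hvan C hCv]; ring
        · have hCv' : C.1 v₁ = false := by simpa using hCv
          rw [key_orth hv₁s hv₁t C C₀ hCv' hC₀', if_neg hne, mul_zero]
      · intro hmem; exact absurd (Finset.mem_univ C₀) hmem
  · rintro ⟨c, rfl⟩ C hC
    simp only [Finset.sum_apply, Pi.smul_apply, Pi.add_apply, smul_eq_mul]
    refine Finset.sum_eq_zero fun W hW => ?_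
    have hv₁W : v₁ ∉ W := by
      rw [hF] at hW; simp only [Finset.mem_filter] at hW; exact hW.2.2.2
    rw [eFun_insert W hv₁W, if_pos hC]
    ring
end

section
/- Let G' be a switching network built from a finite family H of functions h : 𝒞 → ℝ including h_{s'} ≡ −1 and h_{t'} ≡ 1, where there is an edge labeled e (a directed edge of G) between vertices v', w' of G' iff h_{v'}(C) = h_{w'}(C) for every cut C not crossed by e. Then G' is sound: if some input graph G is accepted (there is a path from s' to t' in G' whose edge labels all lie in E(G)), then G contains a directed path from s to t. -/
/-- Soundness of switching networks built from functions on cuts: if there is a path from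
`s'` to `t'` in the network whose edge labels all lie in `E`, where consecutive network
vertices agree on every cut not crossed by the label, then `E` has a path from `s` to `t`. -/
theorem stmt6 {V : Type*} [Fintype V] (s t : V) (hst : s ≠ t) (E : V → V → Prop)
    {ι : Type*} (hfun : ι → STCut V s t → ℝ) (s' t' : ι)
    (hs' : ∀ C, hfun s' C = -1) (ht' : ∀ C, hfun t' C = 1)
    (haccept : ∃ n, ∃ p : Fin (n + 1) → ι, p 0 = s' ∧ p (Fin.last n) = t' ∧
      ∀ i : Fin n, ∃ a b : V, E a b ∧
        ∀ C : STCut V s t, ¬(C.1 a = true ∧ C.1 b = false) →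
          hfun (p i.castSucc) C = hfun (p i.succ) C) :
    Relation.ReflTransGen E s t := by
  classical
  by_contra hreach
  set C : V → Bool := fun v => decide (Relation.ReflTransGen E s v) with hC
  have hCs : C s = true := by simp [hC]; exact Relation.ReflTransGen.refl
  have hCt : C t = false := by simp [hC, hreach]
  obtain ⟨n, p, hp0, hpn, hstep⟩ := haccept
  set Cut : STCut V s t := ⟨C, hCs, hCt⟩ with hCut
  have key : ∀ k : ℕ, ∀ hk : k ≤ n, hfun (p ⟨k, Nat.lt_succ_of_le hk⟩) Cut = -1 := by
    intro k
    induction k with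
    | zero =>
      intro _
      have h0 : (⟨0, Nat.lt_succ_of_le (Nat.zero_le n)⟩ : Fin (n + 1)) = 0 := rfl
      rw [h0, hp0, hs']
    | succ k ih =>
      intro hk
      have hkn : k < n := hk
      obtain ⟨a, b, hab, heq⟩ := hstep ⟨k, hkn⟩
      have hnc : ¬(Cut.1 a = true ∧ Cut.1 b = false) := by
        rintro ⟨ha, hb⟩
        simp only [hCut, hC, decide_eq_true_eq, decide_eq_false_iff_not] at ha hb
        exact hb (ha.tail hab)
      have := heq Cut hnc
      have hcs : (Fin.castSucc ⟨k, hkn⟩ : Fin (n + 1)) = ⟨k, Nat.lt_succ_of_le (le_of_lt hkn)⟩ := rfl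
      have hsu : (Fin.succ ⟨k, hkn⟩ : Fin (n + 1)) = ⟨k + 1, Nat.lt_succ_of_le hk⟩ := rfl
      rw [hcs, hsu] at this
      rw [← this, ih (le_of_lt hkn)]
  have hlast := key n le_rfl
  have : (⟨n, Nat.lt_succ_of_le le_rfl⟩ : Fin (n + 1)) = Fin.last n := rfl
  rw [this, hpn, ht'] at hlast
  linarith
end

section
/- Let v₁, …, v_m be distinct vertices in V(G)\{s,t}, set V_i = {v₁,…,v_i} and V_0 = ∅. Suppose E is a set of directed edges such that for each i ∈ [1,m], either s → v_i ∈ E or v_i → t ∈ E. Then there exist signs ε_0 = −1, ε_1, …, ε_m ∈ {−1,+1} such that for each i ∈ [0, m−1], the function ε_{i+1}e_{V_{i+1}} − ε_i e_{V_i} vanishes on all cuts not crossed by s → v_{i+1} (if s → v_{i+1} ∈ E) or vanishes on all cuts not crossed by v_{i+1} → t (if v_{i+1} → t ∈ E). In particular one can reach either e_{V_m} or −e_{V_m} from −e_∅ in m steps, each step using an edge of E. -/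
/-- `Vset v j = {v_1, …, v_j}`, the first `j` of the given vertices. -/
def Vset {V : Type*} [DecidableEq V] {m : ℕ} (v : Fin m → V) (j : ℕ) : Finset V :=
  (Finset.univ.filter (fun i : Fin m => (i : ℕ) < j)).image v

lemma Vset_succ {V : Type*} [DecidableEq V] {m : ℕ} (v : Fin m → V) (i : Fin m) :
    Vset v ((i : ℕ) + 1) = insert (v i) (Vset v (i : ℕ)) := by
  unfold Vset
  rw [show (Finset.univ.filter (fun j : Fin m => (j : ℕ) < (i : ℕ) + 1))
      = insert i (Finset.univ.filter (fun j : Fin m => (j : ℕ) < (i : ℕ))) by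
    ext j
    simp [Nat.lt_succ_iff_lt_or_eq, Fin.val_eq_val, or_comm, le_iff_eq_or_lt]]
  rw [Finset.image_insert]

lemma not_mem_Vset {V : Type*} [DecidableEq V] {m : ℕ} (v : Fin m → V)
    (hinj : Function.Injective v) (i : Fin m) : v i ∉ Vset v (i : ℕ) := by
  unfold Vset
  simp only [Finset.mem_image, Finset.mem_filter, Finset.mem_univ, true_and]
  rintro ⟨j, hj, hji⟩
  exact absurd (hinj hji ▸ hj) (lt_irrefl _)

lemma eFun_insert_true {V : Type*} [DecidableEq V] {s t : V} (W : Finset V) (x : V)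
    (hx : x ∉ W) (C : STCut V s t) (hC : C.1 x = true) :
    eFun (insert x W) C = -eFun W C := by
  unfold eFun
  rw [Finset.filter_insert, if_pos hC, Finset.card_insert_of_notMem (fun h => hx (Finset.mem_filter.1 h).1)]
  rw [pow_succ]
  ring

lemma eFun_insert_false {V : Type*} [DecidableEq V] {s t : V} (W : Finset V) (x : V)
    (C : STCut V s t) (hC : C.1 x = false) :
    eFun (insert x W) C = eFun W C := by
  unfold eFun
  rw [Finset.filter_insert, if_neg (by simp [hC])]

theorem stmt8 {V : Type*} [Fintype V] [DecidableEq V] (s t : V) (hst : s ≠ t)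
    (m : ℕ) (v : Fin m → V) (hinj : Function.Injective v)
    (hvs : ∀ i, v i ≠ s) (hvt : ∀ i, v i ≠ t)
    (E : V → V → Prop) (hE : ∀ i, E s (v i) ∨ E (v i) t) :
    ∃ ε : Fin (m + 1) → ℝ, ε 0 = -1 ∧ (∀ i, ε i = 1 ∨ ε i = -1) ∧
      ∀ i : Fin m,
        (E s (v i) ∧ ∀ C : STCut V s t, C.1 (v i) = true →
          ε i.succ * eFun (Vset v ((i : ℕ) + 1)) C - ε i.castSucc * eFun (Vset v i) C = 0) ∨
        (E (v i) t ∧ ∀ C : STCut V s t, C.1 (v i) = false →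
          ε i.succ * eFun (Vset v ((i : ℕ) + 1)) C - ε i.castSucc * eFun (Vset v i) C = 0) := by
  classical
  set f : Fin m → ℝ := fun j => if E s (v j) then -1 else 1 with hf
  set ε : Fin (m + 1) → ℝ := fun i =>
    -∏ j ∈ Finset.univ.filter (fun j : Fin m => (j : ℕ) < (i : ℕ)), f j with hε
  have hsign : ∀ i, ε i = 1 ∨ ε i = -1 := by
    intro i
    have : (∏ j ∈ Finset.univ.filter (fun j : Fin m => (j : ℕ) < (i : ℕ)), f j) = 1 ∨
        (∏ j ∈ Finset.univ.filter (fun j : Fin m => (j : ℕ) < (i : ℕ)), f j) = -1 := by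
      refine Finset.prod_induction f (fun x => x = 1 ∨ x = -1) ?_ (Or.inl rfl) ?_
      · rintro a b (rfl | rfl) (rfl | rfl) <;> norm_num
      · intro j _
        simp only [hf]
        split <;> simp
    rcases this with h | h <;> simp [hε, h]
  have hstep : ∀ i : Fin m, ε i.succ = ε i.castSucc * f i := by
    intro i
    simp only [hε, Fin.val_succ, Fin.coe_castSucc]
    rw [show (Finset.univ.filter (fun j : Fin m => (j : ℕ) < (i : ℕ) + 1))
        = insert i (Finset.univ.filter (fun j : Fin m => (j : ℕ) < (i : ℕ))) by
      ext j
      simp [Nat.lt_succ_iff_lt_or_eq, Fin.val_eq_val, or_comm, le_iff_eq_or_lt]]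
    rw [Finset.prod_insert (by simp)]
    ring
  refine ⟨ε, by simp [hε], hsign, ?_⟩
  intro i
  by_cases hEs : E s (v i)
  · left
    refine ⟨hEs, fun C hC => ?_⟩
    rw [Vset_succ, eFun_insert_true _ _ (not_mem_Vset v hinj i) _ hC, hstep]
    simp only [hf, if_pos hEs]
    ring
  · right
    refine ⟨(hE i).resolve_left hEs, fun C hC => ?_⟩
    rw [Vset_succ, eFun_insert_false _ _ _ hC, hstep]
    simp only [hf, if_neg hEs]
    ring
end

section
/- Fix positive integers x, y, k, N with y ≤ min(x,k) and x + k + 2 ≤ N. Then the hypergeometric probability p(y) = [C(x,y)·C(N−2−x, k−y)] / C(N−2, k) satisfies p(y) ≤ (xk/(N−x−k−2))^y, where C(a,b) denotes the binomial coefficient. -/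
lemma stmt10_aux (x k m : ℕ) : ∀ y, y ≤ k →
    x.choose y * (m - x).choose (k - y) * (m - x - k) ^ y ≤ (x * k) ^ y * m.choose k := by
  intro y
  induction y with
  | zero => intro _; simpa using Nat.choose_le_choose k (Nat.sub_le m x)
  | succ y ih =>
    intro h
    have hy : y ≤ k := Nat.le_of_succ_le h
    have h1 : x.choose (y + 1) ≤ x.choose y * x := by
      calc x.choose (y + 1) ≤ x.choose (y + 1) * (y + 1) :=
            Nat.le_mul_of_pos_right _ (Nat.succ_pos y)
        _ = x.choose y * (x - y) := Nat.choose_succ_right_eq x y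
        _ ≤ x.choose y * x := Nat.mul_le_mul_left _ (Nat.sub_le x y)
    have h2 : (m - x).choose (k - (y + 1)) * (m - x - k) ≤ (m - x).choose (k - y) * k := by
      calc (m - x).choose (k - (y + 1)) * (m - x - k)
          ≤ (m - x).choose (k - y - 1) * (m - x - (k - y - 1)) := by
            rw [show k - (y + 1) = k - y - 1 by omega]
            exact Nat.mul_le_mul_left _ (Nat.sub_le_sub_left (by omega) _)
        _ = (m - x).choose (k - y - 1 + 1) * (k - y - 1 + 1) :=
            (Nat.choose_succ_right_eq _ _).symm
        _ = (m - x).choose (k - y) * (k - y) := by rw [show k - y - 1 + 1 = k - y by omega]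
        _ ≤ (m - x).choose (k - y) * k := Nat.mul_le_mul_left _ (Nat.sub_le k y)
    calc x.choose (y + 1) * (m - x).choose (k - (y + 1)) * (m - x - k) ^ (y + 1)
        = x.choose (y + 1) * ((m - x).choose (k - (y + 1)) * (m - x - k)) * (m - x - k) ^ y := by
          ring
      _ ≤ x.choose y * x * ((m - x).choose (k - y) * k) * (m - x - k) ^ y :=
          Nat.mul_le_mul_right _ (Nat.mul_le_mul h1 h2)
      _ = x * k * (x.choose y * (m - x).choose (k - y) * (m - x - k) ^ y) := by ring
      _ ≤ x * k * ((x * k) ^ y * m.choose k) := Nat.mul_le_mul_left _ (ih hy)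
      _ = (x * k) ^ (y + 1) * m.choose k := by ring

/-- Hypergeometric tail bound: the probability that a uniformly random `k`-subset of an
`(N-2)`-element set meets a fixed `x`-element subset in exactly `y` elements is at most
`(xk/(N-x-k-2))^y`. -/
theorem stmt10 (x y k N : ℕ) (hx : 0 < x) (hy : 0 < y) (hk : 0 < k)
    (hyx : y ≤ x) (hyk : y ≤ k) (hN : x + k + 2 ≤ N) (hN' : x + k + 2 < N) :
    ((x.choose y : ℝ) * ((N - 2 - x).choose (k - y) : ℝ)) / ((N - 2).choose k : ℝ) ≤
      (((x : ℝ) * k) / ((N : ℝ) - x - k - 2)) ^ y := by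
  have hm : k ≤ N - 2 := by omega
  have hd : (0 : ℕ) < N - 2 - x - k := by omega
  have hc : (0 : ℝ) < ((N - 2).choose k : ℝ) := by exact_mod_cast Nat.choose_pos hm
  have hdr : ((N - 2 - x - k : ℕ) : ℝ) = (N : ℝ) - x - k - 2 := by
    have e : N - 2 - x - k + (x + k + 2) = N := by omega
    have := congrArg (Nat.cast (R := ℝ)) e
    push_cast at this
    linarith
  have hdpos : (0 : ℝ) < (N : ℝ) - x - k - 2 := by
    rw [← hdr]; exact_mod_cast hd
  rw [div_pow, div_le_div_iff₀ hc (pow_pos hdpos y), ← hdr]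
  exact_mod_cast stmt10_aux x k (N - 2) y hyk
end

section
/- Given knowledge sets K₁, K₂ (directed graphs on V(G)) and a directed edge v₁ → v₂, the condition that the transitive-closure relations satisfy K̄₂ ⊆ K̄₁ ∪ {v₁ → v₂} (closure taken after union) and K̄₁ ⊆ K̄₂ ∪ {v₁ → v₂} holds if and only if K₂ can be obtained from K₁ by a finite sequence of the reversible operations: (1) add or remove the edge v₁ → v₂; (2) if v₃ → v₄ and v₄ → v₅ are both present and v₃ ≠ v₅, add or remove v₃ → v₅; (3) if s → t is present, add or remove any edge other than s → t. -/
/-- There is a (nontrivial) directed path from `u` to `w` in the knowledge set `K`. -/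
def hasPath {V : Type*} (K : Set (V × V)) (u w : V) : Prop :=
  Relation.TransGen (fun a b => (a, b) ∈ K) u w

/-- The transitive closure of a knowledge set: if `K` has a path from `s` to `t` this is the
complete directed graph on `V`; otherwise it consists of all pairs `u ≠ w` with a path from
`u` to `w` in `K`. -/
def kClosure {V : Type*} (s t : V) (K : Set (V × V)) : Set (V × V) :=
  {p | p.1 ≠ p.2 ∧ (hasPath K s t ∨ hasPath K p.1 p.2)}

/-- Operation 1: add or remove the edge `v₁ → v₂`. -/
def Op1 {V : Type*} (v₁ v₂ : V) (K K' : Set (V × V)) : Prop :=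
  K' = K ∪ {(v₁, v₂)} ∨ K' = K \ {(v₁, v₂)}

/-- Operation 2: if `a → b` and `b → c` are both in `K` and `a ≠ c`, add or remove `a → c`. -/
def Op2 {V : Type*} (K K' : Set (V × V)) : Prop :=
  ∃ a b c : V, a ≠ c ∧ (a, b) ∈ K ∧ (b, c) ∈ K ∧ (K' = K ∪ {(a, c)} ∨ K' = K \ {(a, c)})

/-- Operation 3: if `s → t` is in `K`, add or remove any edge other than `s → t`. -/
def Op3 {V : Type*} (s t : V) (K K' : Set (V × V)) : Prop :=
  (s, t) ∈ K ∧ ∃ e : V × V, e ≠ (s, t) ∧ (K' = K ∪ {e} ∨ K' = K \ {e})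

namespace Stmt15Aux

variable {V : Type*}

/-- The step relation of the theorem. -/
def Step (s t v₁ v₂ : V) (K K' : Set (V × V)) : Prop :=
  Op1 v₁ v₂ K K' ∨ Op2 K K' ∨ Op3 s t K K'

lemma hasPath_mono {K K' : Set (V × V)} (h : K ⊆ K') {u w : V} :
    hasPath K u w → hasPath K' u w :=
  fun hp => Relation.TransGen.mono (fun _ _ hab => h hab) _ _ hp

lemma hasPath_of_edges {X Y : Set (V × V)} (h : ∀ p ∈ X, hasPath Y p.1 p.2)
    {u w : V} (hp : hasPath X u w) : hasPath Y u w := by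
  induction hp with
  | single h' => exact h _ h'
  | tail _ h' ih => exact ih.trans (h _ h')

lemma kClosure_mono (s t : V) {K K' : Set (V × V)} (h : K ⊆ K') :
    kClosure s t K ⊆ kClosure s t K' := by
  rintro p ⟨hne, hp⟩
  exact ⟨hne, hp.imp (hasPath_mono h) (hasPath_mono h)⟩

lemma mem_kClosure_self {s t : V} {K : Set (V × V)} {p : V × V} (hp : p ∈ K) (hne : p.1 ≠ p.2) :
    p ∈ kClosure s t K :=
  ⟨hne, Or.inr (Relation.TransGen.single (by rw [Prod.mk.eta]; exact hp))⟩

lemma kClosure_closed {s t : V} {X Y : Set (V × V)} (h : ∀ p ∈ X, p ∈ kClosure s t Y) :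
    kClosure s t X ⊆ kClosure s t Y := by
  by_cases hst : hasPath Y s t
  · rintro p ⟨hne, -⟩; exact ⟨hne, Or.inl hst⟩
  · have hedge : ∀ p ∈ X, hasPath Y p.1 p.2 := by
      intro p hp
      rcases h p hp with ⟨-, h' | h'⟩
      · exact absurd h' hst
      · exact h'
    rintro p ⟨hne, hp | hp⟩
    · exact absurd (hasPath_of_edges hedge hp) hst
    · exact ⟨hne, Or.inr (hasPath_of_edges hedge hp)⟩

lemma kClosure_eq_full {s t : V} {K : Set (V × V)} (hst' : (s, t) ∈ K) :
    kClosure s t K = {p : V × V | p.1 ≠ p.2} := by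
  ext p
  constructor
  · exact fun h => h.1
  · exact fun h => ⟨h, Or.inl (Relation.TransGen.single hst')⟩

lemma ne_of_noloop {K : Set (V × V)} (hL : ∀ x : V, (x, x) ∉ K) {p : V × V} (hp : p ∈ K) :
    p.1 ≠ p.2 := by
  obtain ⟨a, b⟩ := p
  intro h
  exact hL a (by simpa [show a = b from h] using hp)

variable {s t v₁ v₂ : V}

lemma op1_both {K : Set (V × V)} :
    Relation.ReflTransGen (Step s t v₁ v₂) K (K ∪ {(v₁, v₂)}) ∧
      Relation.ReflTransGen (Step s t v₁ v₂) (K ∪ {(v₁, v₂)}) K := by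
  by_cases h : (v₁, v₂) ∈ K
  · rw [Set.union_eq_self_of_subset_right (Set.singleton_subset_iff.mpr h)]
    exact ⟨.refl, .refl⟩
  · refine ⟨.single (Or.inl (Or.inl rfl)), .single (Or.inl (Or.inr ?_))⟩
    rw [Set.union_singleton, Set.insert_diff_self_of_notMem h]

lemma op2_both {K : Set (V × V)} {a b c : V} (hac : a ≠ c)
    (h1 : (a, b) ∈ K) (h2 : (b, c) ∈ K) :
    Relation.ReflTransGen (Step s t v₁ v₂) K (K ∪ {(a, c)}) ∧
      Relation.ReflTransGen (Step s t v₁ v₂) (K ∪ {(a, c)}) K := by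
  by_cases h : (a, c) ∈ K
  · rw [Set.union_eq_self_of_subset_right (Set.singleton_subset_iff.mpr h)]
    exact ⟨.refl, .refl⟩
  · refine ⟨.single (Or.inr (Or.inl ⟨a, b, c, hac, h1, h2, Or.inl rfl⟩)),
      .single (Or.inr (Or.inl ⟨a, b, c, hac, Set.mem_union_left _ h1,
        Set.mem_union_left _ h2, Or.inr ?_⟩))⟩
    rw [Set.union_singleton, Set.insert_diff_self_of_notMem h]

lemma op3_both {K : Set (V × V)} (hst' : (s, t) ∈ K) (e : V × V) :
    Relation.ReflTransGen (Step s t v₁ v₂) K (K ∪ {e}) ∧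
      Relation.ReflTransGen (Step s t v₁ v₂) (K ∪ {e}) K := by
  by_cases h : e ∈ K
  · rw [Set.union_eq_self_of_subset_right (Set.singleton_subset_iff.mpr h)]
    exact ⟨.refl, .refl⟩
  · have he : e ≠ (s, t) := fun h' => h (h' ▸ hst')
    refine ⟨.single (Or.inr (Or.inr ⟨hst', e, he, Or.inl rfl⟩)),
      .single (Or.inr (Or.inr ⟨Set.mem_union_left _ hst', e, he, Or.inr ?_⟩))⟩
    rw [Set.union_singleton, Set.insert_diff_self_of_notMem h]

lemma op3_fill {K : Set (V × V)} (hst' : (s, t) ∈ K) {S : Set (V × V)} (hS : S.Finite) :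
    Relation.ReflTransGen (Step s t v₁ v₂) K (K ∪ S) ∧
      Relation.ReflTransGen (Step s t v₁ v₂) (K ∪ S) K := by
  refine Set.Finite.induction_on (motive := fun S _ =>
    Relation.ReflTransGen (Step s t v₁ v₂) K (K ∪ S) ∧
      Relation.ReflTransGen (Step s t v₁ v₂) (K ∪ S) K) S hS ?_ ?_
  · simp only [Set.union_empty]
    exact ⟨.refl, .refl⟩
  · intro q S hq hSf ih
    obtain ⟨h1, h2⟩ := ih
    obtain ⟨g1, g2⟩ := op3_both (K := K ∪ S) (v₁ := v₁) (v₂ := v₂)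
      (Set.mem_union_left _ hst') q
    have he : K ∪ insert q S = (K ∪ S) ∪ {q} := by
      rw [Set.union_singleton, Set.union_insert]
    rw [he]
    exact ⟨h1.trans g1, g2.trans h2⟩

/-- Adding a transitive shortcut edge via a sequence of Op2 moves, reversibly. -/
lemma shortcut {X : Set (V × V)} {a c : V} (hp : hasPath X a c) :
    ∀ Y : Set (V × V), X ⊆ Y → Y ⊆ {p : V × V | p.1 ≠ p.2 ∧ hasPath X p.1 p.2} →
      ∃ Y', Relation.ReflTransGen (Step s t v₁ v₂) Y Y' ∧
        Relation.ReflTransGen (Step s t v₁ v₂) Y' Y ∧ Y ⊆ Y' ∧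
        Y' ⊆ {p : V × V | p.1 ≠ p.2 ∧ hasPath X p.1 p.2} ∧ ((a, c) ∈ Y' ∨ a = c) := by
  induction hp with
  | @single b h =>
    intro Y hXY hYQ
    exact ⟨Y, .refl, .refl, subset_rfl, hYQ, Or.inl (hXY h)⟩
  | @tail b c hp' hedge ih =>
    intro Y hXY hYQ
    obtain ⟨Y', h1, h2, hYY', hY'Q, hb⟩ := ih Y hXY hYQ
    rcases hb with hb | rfl
    · by_cases hac : a = c
      · exact ⟨Y', h1, h2, hYY', hY'Q, Or.inr hac⟩
      · obtain ⟨g1, g2⟩ := op2_both (s := s) (t := t) (v₁ := v₁) (v₂ := v₂) hac hb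
          (hYY' (hXY hedge))
        refine ⟨Y' ∪ {(a, c)}, h1.trans g1, g2.trans h2,
          hYY'.trans Set.subset_union_left, ?_, Or.inl (Set.mem_union_right _ rfl)⟩
        rintro p (hp | hp)
        · exact hY'Q hp
        · rw [Set.mem_singleton_iff] at hp
          subst hp
          exact ⟨hac, hp'.tail hedge⟩
    · exact ⟨Y', h1, h2, hYY', hY'Q, Or.inl (hYY' (hXY hedge))⟩

/-- Canonical form: a loopless knowledge set can be transformed to its closure and back. -/
lemma canon [Finite V] (hst : s ≠ t) {X : Set (V × V)} (hX : ∀ p ∈ X, p.1 ≠ p.2) :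
    Relation.ReflTransGen (Step s t v₁ v₂) X (kClosure s t X) ∧
      Relation.ReflTransGen (Step s t v₁ v₂) (kClosure s t X) X := by
  set Q : Set (V × V) := {p : V × V | p.1 ≠ p.2 ∧ hasPath X p.1 p.2} with hQdef
  have hXQ : X ⊆ Q := fun p hp =>
    ⟨hX p hp, Relation.TransGen.single (by rw [Prod.mk.eta]; exact hp)⟩
  by_cases hpath : hasPath X s t
  · have hC : kClosure s t X = {p : V × V | p.1 ≠ p.2} := by
      ext p
      exact ⟨fun h => h.1, fun h => ⟨h, Or.inl hpath⟩⟩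
    obtain ⟨Y, h1, h2, hXY, hYQ, hmem⟩ := shortcut (s := s) (t := t) (v₁ := v₁) (v₂ := v₂)
      hpath X subset_rfl hXQ
    rcases hmem with hmem | h
    · obtain ⟨g1, g2⟩ := op3_fill (v₁ := v₁) (v₂ := v₂) hmem
        (S := {p : V × V | p.1 ≠ p.2} \ Y) (Set.toFinite _)
      have hun : Y ∪ ({p : V × V | p.1 ≠ p.2} \ Y) = {p : V × V | p.1 ≠ p.2} :=
        Set.union_diff_cancel (fun p hp => (hYQ hp).1)
      rw [hun] at g1 g2
      rw [hC]
      exact ⟨h1.trans g1, g2.trans h2⟩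
    · exact absurd h hst
  · have hC : kClosure s t X = Q := by
      ext p
      constructor
      · rintro ⟨h1, h2 | h2⟩
        · exact absurd h2 hpath
        · exact ⟨h1, h2⟩
      · rintro ⟨h1, h2⟩
        exact ⟨h1, Or.inr h2⟩
    have key : ∀ S : Set (V × V), S.Finite → S ⊆ Q →
        ∃ Y, Relation.ReflTransGen (Step s t v₁ v₂) X Y ∧
          Relation.ReflTransGen (Step s t v₁ v₂) Y X ∧ X ∪ S ⊆ Y ∧ Y ⊆ Q := by
      intro S hS
      refine Set.Finite.induction_on (motive := fun S _ => S ⊆ Q →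
        ∃ Y, Relation.ReflTransGen (Step s t v₁ v₂) X Y ∧
          Relation.ReflTransGen (Step s t v₁ v₂) Y X ∧ X ∪ S ⊆ Y ∧ Y ⊆ Q) S hS ?_ ?_
      · exact fun _ => ⟨X, .refl, .refl, by simp, hXQ⟩
      · intro q S hq hSf ih hins
        obtain ⟨Y, h1, h2, hXS, hYQ⟩ := ih fun p hp => hins (Set.mem_insert_of_mem _ hp)
        have hqQ : q ∈ Q := hins (Set.mem_insert _ _)
        obtain ⟨Y', g1, g2, hYY', hY'Q, hmem⟩ := shortcut (s := s) (t := t) (v₁ := v₁)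
          (v₂ := v₂) hqQ.2 Y (fun p hp => hXS (Set.mem_union_left _ hp)) hYQ
        rcases hmem with hmem | h
        · refine ⟨Y', h1.trans g1, g2.trans h2, ?_, hY'Q⟩
          rintro p (hp | hp)
          · exact hYY' (hXS (Set.mem_union_left _ hp))
          · rcases Set.mem_insert_iff.mp hp with rfl | hp
            · rwa [Prod.mk.eta] at hmem
            · exact hYY' (hXS (Set.mem_union_right _ hp))
        · exact absurd h hqQ.1
    obtain ⟨Y, h1, h2, hXQY, hYQ⟩ := key Q (Set.toFinite _) subset_rfl
    have hYeq : Y = Q := subset_antisymm hYQ fun p hp => hXQY (Set.mem_union_right _ hp)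
    rw [hC, ← hYeq]
    exact ⟨h1, h2⟩


lemma step_closure_eq (hv : v₁ ≠ v₂) {K K' : Set (V × V)}
    (h : Step s t v₁ v₂ K K') (hL : ∀ x : V, (x, x) ∉ K) :
    kClosure s t (K' ∪ {(v₁, v₂)}) = kClosure s t (K ∪ {(v₁, v₂)}) := by
  rcases h with (h | h) | ⟨a, b, c, hac, h1, h2, h'⟩ | ⟨hstK, e, he, h'⟩
  · rw [h, Set.union_assoc, Set.union_self]
  · rw [h, Set.diff_union_self]
  · rcases h' with rfl | rfl
    · apply subset_antisymm
      · apply kClosure_closed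
        rintro p ((hp | hp) | hp)
        · exact mem_kClosure_self (Set.mem_union_left _ hp) (ne_of_noloop hL hp)
        · rw [Set.mem_singleton_iff] at hp; subst hp
          have hp1 : hasPath (K ∪ {(v₁, v₂)}) a b :=
            Relation.TransGen.single (Set.mem_union_left _ h1)
          exact ⟨hac, Or.inr (hp1.tail (Set.mem_union_left _ h2))⟩
        · rw [Set.mem_singleton_iff] at hp; subst hp
          exact mem_kClosure_self (Set.mem_union_right _ rfl) hv
      · exact kClosure_mono s t (Set.union_subset_union_left _ Set.subset_union_left)
    · apply subset_antisymm
      · exact kClosure_mono s t (Set.union_subset_union_left _ Set.diff_subset)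
      · apply kClosure_closed
        rintro p (hp | hp)
        · by_cases hpe : p = (a, c)
          · subst hpe
            have hb1 : (a, b) ∈ K \ {(a, c)} := by
              refine ⟨h1, ?_⟩
              simp only [Set.mem_singleton_iff, Prod.mk.injEq, not_and]
              rintro - rfl
              exact hL _ h2
            have hb2 : (b, c) ∈ K \ {(a, c)} := by
              refine ⟨h2, ?_⟩
              simp only [Set.mem_singleton_iff, Prod.mk.injEq, not_and]
              rintro rfl -
              exact hL _ h1
            have hp1 : hasPath (K \ {(a, c)} ∪ {(v₁, v₂)}) a b :=
              Relation.TransGen.single (Set.mem_union_left _ hb1)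
            exact ⟨hac, Or.inr (hp1.tail (Set.mem_union_left _ hb2))⟩
          · exact mem_kClosure_self (Set.mem_union_left _ ⟨hp, hpe⟩) (ne_of_noloop hL hp)
        · rw [Set.mem_singleton_iff] at hp; subst hp
          exact mem_kClosure_self (Set.mem_union_right _ rfl) hv
  · have hm1 : (s, t) ∈ K ∪ {(v₁, v₂)} := Set.mem_union_left _ hstK
    have hm2 : (s, t) ∈ K' ∪ {(v₁, v₂)} := by
      rcases h' with rfl | rfl
      · exact Set.mem_union_left _ (Set.mem_union_left _ hstK)
      · exact Set.mem_union_left _ ⟨hstK,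
          fun hm => he (Set.mem_singleton_iff.mp hm).symm⟩
    rw [kClosure_eq_full hm1, kClosure_eq_full hm2]

lemma step_loop (hv : v₁ ≠ v₂) {K K' : Set (V × V)} (h : Step s t v₁ v₂ K K') {x : V}
    (hx : (x, x) ∈ K) : (x, x) ∈ K' ∨ (s, t) ∈ K' := by
  rcases h with (h | h) | ⟨a, b, c, hac, -, -, h'⟩ | ⟨hstK, e, he, h'⟩
  · exact Or.inl (h ▸ Set.mem_union_left _ hx)
  · subst h
    refine Or.inl ⟨hx, ?_⟩
    simp only [Set.mem_singleton_iff, Prod.mk.injEq, not_and]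
    exact fun h1 h2 => absurd (h1.symm.trans h2) hv
  · rcases h' with rfl | rfl
    · exact Or.inl (Set.mem_union_left _ hx)
    · refine Or.inl ⟨hx, ?_⟩
      simp only [Set.mem_singleton_iff, Prod.mk.injEq, not_and]
      exact fun h1 h2 => absurd (h1.symm.trans h2) hac
  · rcases h' with rfl | rfl
    · exact Or.inr (Set.mem_union_left _ hstK)
    · exact Or.inr ⟨hstK, fun hm => he (Set.mem_singleton_iff.mp hm).symm⟩

lemma step_newloop (hv : v₁ ≠ v₂) {K K' : Set (V × V)} (h : Step s t v₁ v₂ K K') {x : V}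
    (hx : (x, x) ∈ K') : (x, x) ∈ K ∨ (s, t) ∈ K := by
  rcases h with (h | h) | ⟨a, b, c, hac, -, -, h'⟩ | ⟨hstK, -⟩
  · subst h
    rcases hx with hx | hx
    · exact Or.inl hx
    · rw [Set.mem_singleton_iff, Prod.mk.injEq] at hx
      exact absurd (hx.1.symm.trans hx.2) hv
  · exact Or.inl (h ▸ hx).1
  · rcases h' with rfl | rfl
    · rcases hx with hx | hx
      · exact Or.inl hx
      · rw [Set.mem_singleton_iff, Prod.mk.injEq] at hx
        exact absurd (hx.1.symm.trans hx.2) hac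
    · exact Or.inl hx.1
  · exact Or.inr hstK

end Stmt15Aux

theorem stmt15 {V : Type*} [Fintype V] (s t v₁ v₂ : V) (hst : s ≠ t) (hv : v₁ ≠ v₂)
    (K₁ K₂ : Set (V × V)) (hK₁ : ∀ p ∈ K₁, p.1 ≠ p.2) (hK₂ : ∀ p ∈ K₂, p.1 ≠ p.2) :
    (kClosure s t K₂ ⊆ kClosure s t (K₁ ∪ {(v₁, v₂)}) ∧
        kClosure s t K₁ ⊆ kClosure s t (K₂ ∪ {(v₁, v₂)})) ↔
      Relation.ReflTransGen
        (fun K K' => Op1 v₁ v₂ K K' ∨ Op2 K K' ∨ Op3 s t K K') K₁ K₂ := by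
  classical
  constructor
  · rintro ⟨h21, h12⟩
    have e1 : kClosure s t (K₂ ∪ {(v₁, v₂)}) ⊆ kClosure s t (K₁ ∪ {(v₁, v₂)}) := by
      apply Stmt15Aux.kClosure_closed
      rintro p (hp | hp)
      · exact h21 (Stmt15Aux.mem_kClosure_self hp (hK₂ p hp))
      · rw [Set.mem_singleton_iff] at hp; subst hp
        exact Stmt15Aux.mem_kClosure_self (Set.mem_union_right _ rfl) hv
    have e2 : kClosure s t (K₁ ∪ {(v₁, v₂)}) ⊆ kClosure s t (K₂ ∪ {(v₁, v₂)}) := by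
      apply Stmt15Aux.kClosure_closed
      rintro p (hp | hp)
      · exact h12 (Stmt15Aux.mem_kClosure_self hp (hK₁ p hp))
      · rw [Set.mem_singleton_iff] at hp; subst hp
        exact Stmt15Aux.mem_kClosure_self (Set.mem_union_right _ rfl) hv
    have hEq : kClosure s t (K₂ ∪ {(v₁, v₂)}) = kClosure s t (K₁ ∪ {(v₁, v₂)}) :=
      subset_antisymm e1 e2
    have hL1 : ∀ p ∈ K₁ ∪ {(v₁, v₂)}, p.1 ≠ p.2 := by
      rintro p (hp | hp)
      · exact hK₁ p hp
      · rw [Set.mem_singleton_iff] at hp; subst hp; exact hv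
    have hL2 : ∀ p ∈ K₂ ∪ {(v₁, v₂)}, p.1 ≠ p.2 := by
      rintro p (hp | hp)
      · exact hK₂ p hp
      · rw [Set.mem_singleton_iff] at hp; subst hp; exact hv
    obtain ⟨a1, -⟩ := Stmt15Aux.canon (v₁ := v₁) (v₂ := v₂) hst hL1
    obtain ⟨-, b2⟩ := Stmt15Aux.canon (v₁ := v₁) (v₂ := v₂) hst hL2
    obtain ⟨c1, -⟩ := Stmt15Aux.op1_both (s := s) (t := t) (v₁ := v₁) (v₂ := v₂) (K := K₁)
    obtain ⟨-, d2⟩ := Stmt15Aux.op1_both (s := s) (t := t) (v₁ := v₁) (v₂ := v₂) (K := K₂)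
    rw [hEq] at b2
    exact c1.trans (a1.trans (b2.trans d2))
  · intro h
    have inv : ∀ K : Set (V × V),
        Relation.ReflTransGen (Stmt15Aux.Step s t v₁ v₂) K₁ K →
        ((∀ x : V, (x, x) ∉ K) →
          kClosure s t (K ∪ {(v₁, v₂)}) = kClosure s t (K₁ ∪ {(v₁, v₂)})) ∧
        ((∃ x : V, (x, x) ∈ K) →
          kClosure s t (K₁ ∪ {(v₁, v₂)}) = {p : V × V | p.1 ≠ p.2}) := by
      intro K h'
      induction h' with
      | refl => exact ⟨fun _ => rfl, fun ⟨x, hx⟩ => absurd rfl (hK₁ _ hx)⟩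
      | @tail K K' hK step ih =>
        by_cases hL : ∀ x : V, (x, x) ∉ K
        · have hCK := ih.1 hL
          constructor
          · intro _
            rw [Stmt15Aux.step_closure_eq hv step hL, hCK]
          · rintro ⟨x, hx'⟩
            rcases Stmt15Aux.step_newloop hv step hx' with hx | hstK
            · exact absurd hx (hL x)
            · rw [← hCK, Stmt15Aux.kClosure_eq_full (Set.mem_union_left _ hstK)]
        · push_neg at hL
          obtain ⟨x, hx⟩ := hL
          have hF := ih.2 ⟨x, hx⟩
          constructor
          · intro hL'
            rcases Stmt15Aux.step_loop hv step hx with hx' | hstK'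
            · exact absurd hx' (hL' x)
            · rw [hF, Stmt15Aux.kClosure_eq_full (Set.mem_union_left _ hstK')]
          · exact fun _ => hF
    have hC := (inv K₂ h).1 (fun x hx => hK₂ _ hx rfl)
    constructor
    · exact (Stmt15Aux.kClosure_mono s t Set.subset_union_left).trans hC.le
    · have hm := Stmt15Aux.kClosure_mono s t
        (Set.subset_union_left : K₁ ⊆ K₁ ∪ {(v₁, v₂)})
      rw [← hC] at hm
      exact hm
end

section
/- Two knowledge sets K₁ and K₂ have equal transitive closures if and only if K₂ can be obtained from K₁ using only the operations: (2) if v₃ → v₄ and v₄ → v₅ are both in K and v₃ ≠ v₅, add or remove v₃ → v₅; and (3) if s → t is in K, add or remove any edge other than s → t. -/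
section Aux

variable {V : Type*}

/-- The single-step relation. -/
def Step (s t : V) (K K' : Set (V × V)) : Prop := Op2 K K' ∨ Op3 s t K K'

/-- Two-way reachability. -/
def Rel2 (s t : V) (K K' : Set (V × V)) : Prop :=
  Relation.ReflTransGen (Step s t) K K' ∧ Relation.ReflTransGen (Step s t) K' K

lemma rel2_refl (s t : V) (K : Set (V × V)) : Rel2 s t K K :=
  ⟨Relation.ReflTransGen.refl, Relation.ReflTransGen.refl⟩

lemma rel2_trans {s t : V} {K L M : Set (V × V)} (h1 : Rel2 s t K L) (h2 : Rel2 s t L M) :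
    Rel2 s t K M :=
  ⟨h1.1.trans h2.1, h2.2.trans h1.2⟩

lemma rel2_symm {s t : V} {K L : Set (V × V)} (h : Rel2 s t K L) : Rel2 s t L K :=
  ⟨h.2, h.1⟩

lemma hasPath_mono {K K' : Set (V × V)} (h : K ⊆ K') {u w : V} (hp : hasPath K u w) :
    hasPath K' u w :=
  Relation.TransGen.mono (fun _ _ hab => h hab) _ _ hp

lemma hasPath_of_edges {K K' : Set (V × V)} (h : ∀ p ∈ K', hasPath K p.1 p.2) {u w : V}
    (hp : hasPath K' u w) : hasPath K u w := by
  have h2 : Relation.TransGen (Relation.TransGen (fun a b => (a, b) ∈ K)) u w :=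
    Relation.TransGen.mono (fun a b hab => h (a, b) hab) _ _ hp
  rwa [Relation.transGen_idem] at h2

lemma kClosure_congr {s t : V} {K K' : Set (V × V)}
    (h : ∀ u w : V, hasPath K u w ↔ hasPath K' u w) : kClosure s t K = kClosure s t K' := by
  ext p
  simp only [kClosure, Set.mem_setOf_eq, h]

lemma kClosure_of_path {s t : V} {K : Set (V × V)} (h : hasPath K s t) :
    kClosure s t K = {p : V × V | p.1 ≠ p.2} := by
  ext p
  simp [kClosure, h]

/-- An Op2 addition is two-way reachable. -/
lemma rel2_op2_add {s t a b c : V} {K : Set (V × V)} (hac : a ≠ c)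
    (h1 : (a, b) ∈ K) (h2 : (b, c) ∈ K) : Rel2 s t K (K ∪ {(a, c)}) := by
  by_cases h : (a, c) ∈ K
  · have he : K ∪ {(a, c)} = K := by
      apply Set.union_eq_self_of_subset_right
      simpa using h
    rw [he]; exact rel2_refl s t K
  · have hKK : (K ∪ {(a, c)}) \ {(a, c)} = K := by
      ext p
      simp only [Set.mem_diff, Set.mem_union, Set.mem_singleton_iff]
      constructor
      · rintro ⟨hp | hp, hp2⟩
        · exact hp
        · exact absurd hp hp2
      · intro hp
        exact ⟨Or.inl hp, fun he => h (he ▸ hp)⟩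
    exact ⟨Relation.ReflTransGen.single (Or.inl ⟨a, b, c, hac, h1, h2, Or.inl rfl⟩),
      Relation.ReflTransGen.single (Or.inl ⟨a, b, c, hac, Set.mem_union_left _ h1,
        Set.mem_union_left _ h2, Or.inr hKK.symm⟩)⟩

/-- An Op3 addition is two-way reachable. -/
lemma rel2_op3_add {s t : V} {K : Set (V × V)} (hst : (s, t) ∈ K) {e : V × V}
    (he : e ≠ (s, t)) : Rel2 s t K (K ∪ {e}) := by
  by_cases h : e ∈ K
  · have heq : K ∪ {e} = K := by
      apply Set.union_eq_self_of_subset_right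
      simpa using h
    rw [heq]; exact rel2_refl s t K
  · have hKK : (K ∪ {e}) \ {e} = K := by
      ext p
      simp only [Set.mem_diff, Set.mem_union, Set.mem_singleton_iff]
      constructor
      · rintro ⟨hp | hp, hp2⟩
        · exact hp
        · exact absurd hp hp2
      · intro hp
        exact ⟨Or.inl hp, fun h' => h (h' ▸ hp)⟩
    exact ⟨Relation.ReflTransGen.single (Or.inr ⟨hst, e, he, Or.inl rfl⟩),
      Relation.ReflTransGen.single (Or.inr ⟨Set.mem_union_left _ hst, e, he, Or.inr hKK.symm⟩)⟩

/-- Any transitive edge can be added (two-way reachably) using Op2, staying inside the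
closure. -/
lemma reach_add_path (s t : V) {K : Set (V × V)} {u w : V} (h : hasPath K u w) :
    u ≠ w → ∃ K', Rel2 s t K K' ∧ (u, w) ∈ K' ∧ K ⊆ K' ∧
      ∀ p ∈ K', p ∈ K ∨ (p.1 ≠ p.2 ∧ hasPath K p.1 p.2) := by
  induction h using Relation.TransGen.head_induction_on with
  | single h =>
    intro _
    exact ⟨K, rel2_refl s t K, h, le_refl _, fun p hp => Or.inl hp⟩
  | head h' hpath IH =>
    intro huw
    rename_i x v
    by_cases hvw : v = w
    · subst hvw
      exact ⟨K, rel2_refl s t K, h', le_refl _, fun p hp => Or.inl hp⟩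
    · obtain ⟨K'', hR, hmem, hsub, hgood⟩ := IH hvw
      refine ⟨K'' ∪ {(x, w)}, rel2_trans hR (rel2_op2_add huw (hsub h') hmem),
        Set.mem_union_right _ rfl, hsub.trans Set.subset_union_left, ?_⟩
      rintro p (hp | hp)
      · exact hgood p hp
      · rw [Set.mem_singleton_iff] at hp
        subst hp
        exact Or.inr ⟨huw, Relation.TransGen.head h' hpath⟩

/-- From a set containing `(s,t)`, any superset is two-way reachable via Op3. -/
lemma rel2_op3_superset [Fintype V] {s t : V} :
    ∀ (n : ℕ) (K M : Set (V × V)), (s, t) ∈ K → K ⊆ M → (M \ K).ncard ≤ n →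
      Rel2 s t K M := by
  intro n
  induction n with
  | zero =>
    intro K M hst hKM hcard
    have hfin : (M \ K).Finite := Set.toFinite _
    rw [Nat.le_zero, Set.ncard_eq_zero hfin, Set.diff_eq_empty] at hcard
    rw [subset_antisymm hcard hKM]
    exact rel2_refl s t K
  | succ n ih =>
    intro K M hst hKM hcard
    by_cases hMK : M ⊆ K
    · rw [subset_antisymm hMK hKM]
      exact rel2_refl s t K
    · obtain ⟨e, heM, heK⟩ := Set.not_subset.mp hMK
      have he : e ≠ (s, t) := fun h => heK (h ▸ hst)
      refine rel2_trans (rel2_op3_add hst he) (ih (K ∪ {e}) M (Set.mem_union_left _ hst) ?_ ?_)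
      · rw [Set.union_subset_iff]
        exact ⟨hKM, by simpa using heM⟩
      · have hsub : M \ (K ∪ {e}) ⊆ (M \ K) \ {e} := by
          intro p hp
          simp only [Set.mem_diff, Set.mem_union, Set.mem_singleton_iff] at hp ⊢
          tauto
        have h1 : ((M \ K) \ {e}).ncard = (M \ K).ncard - 1 :=
          Set.ncard_diff_singleton_of_mem ⟨heM, heK⟩
        have h2 : 1 ≤ (M \ K).ncard := by
          rw [Nat.one_le_iff_ne_zero, ← Nat.pos_iff_ne_zero]
          exact (Set.ncard_pos (Set.toFinite _)).mpr ⟨e, heM, heK⟩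
        have := Set.ncard_le_ncard hsub (Set.toFinite _)
        omega

/-- Two sets each containing `(s,t)` are two-way reachable. -/
lemma rel2_op3_target [Fintype V] {s t : V} {K M : Set (V × V)} (hK : (s, t) ∈ K)
    (hM : (s, t) ∈ M) : Rel2 s t K M := by
  refine rel2_trans (rel2_op3_superset (((K ∪ M) \ K).ncard) K (K ∪ M) hK
      Set.subset_union_left (le_refl _))
    (rel2_symm (rel2_op3_superset (((K ∪ M) \ M).ncard) M (K ∪ M) hM
      Set.subset_union_right (le_refl _)))

/-- If `K` is loop-free with no `s`-`t` path, it is two-way reachable from its closure. -/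
lemma rel2_to_closure [Fintype V] {s t : V} {K : Set (V × V)}
    (hK : ∀ p ∈ K, p.1 ≠ p.2) (hno : ¬ hasPath K s t) :
    Rel2 s t K (kClosure s t K) := by
  suffices h : ∀ (n : ℕ) (K' : Set (V × V)), K ⊆ K' →
      (∀ p ∈ K', p ∈ K ∨ (p.1 ≠ p.2 ∧ hasPath K p.1 p.2)) →
      ((kClosure s t K) \ K').ncard ≤ n → Rel2 s t K' (kClosure s t K) by
    exact h _ K (le_refl _) (fun p hp => Or.inl hp) (le_refl _)
  intro n
  induction n with
  | zero =>
    intro K' hsub hgood hcard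
    have hfin : (kClosure s t K \ K').Finite := Set.toFinite _
    rw [Nat.le_zero, Set.ncard_eq_zero hfin, Set.diff_eq_empty] at hcard
    have hK'C : K' ⊆ kClosure s t K := by
      intro p hp
      rcases hgood p hp with h | h
      · exact ⟨hK p h, Or.inr (Relation.TransGen.single h)⟩
      · exact ⟨h.1, Or.inr h.2⟩
    rw [subset_antisymm hK'C hcard]
    exact rel2_refl s t _
  | succ n ih =>
    intro K' hsub hgood hcard
    by_cases hCK' : kClosure s t K ⊆ K'
    · have hK'C : K' ⊆ kClosure s t K := by
        intro p hp
        rcases hgood p hp with h | h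
        · exact ⟨hK p h, Or.inr (Relation.TransGen.single h)⟩
        · exact ⟨h.1, Or.inr h.2⟩
      rw [subset_antisymm hK'C hCK']
      exact rel2_refl s t _
    · obtain ⟨p, hpC, hpK'⟩ := Set.not_subset.mp hCK'
      have hpathK : hasPath K p.1 p.2 := hpC.2.resolve_left hno
      have hpathK' : hasPath K' p.1 p.2 := hasPath_mono hsub hpathK
      obtain ⟨K'', hR, hmem, hsub', hgood'⟩ := reach_add_path s t hpathK' hpC.1
      have hedges : ∀ q ∈ K', hasPath K q.1 q.2 := by
        intro q hq
        rcases hgood q hq with h | h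
        · exact Relation.TransGen.single h
        · exact h.2
      refine rel2_trans hR (ih K'' (hsub.trans hsub') ?_ ?_)
      · intro q hq
        rcases hgood' q hq with h | h
        · exact hgood q h
        · exact Or.inr ⟨h.1, hasPath_of_edges hedges h.2⟩
      · have hsub2 : kClosure s t K \ K'' ⊆ (kClosure s t K \ K') \ {p} := by
          intro q hq
          simp only [Set.mem_diff, Set.mem_singleton_iff] at hq ⊢
          refine ⟨⟨hq.1, fun h => hq.2 (hsub' h)⟩, fun h => ?_⟩
          subst h
          exact hq.2 hmem
        have h1 : ((kClosure s t K \ K') \ {p}).ncard = (kClosure s t K \ K').ncard - 1 :=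
          Set.ncard_diff_singleton_of_mem ⟨hpC, hpK'⟩
        have h2 : 1 ≤ (kClosure s t K \ K').ncard := by
          rw [Nat.one_le_iff_ne_zero, ← Nat.pos_iff_ne_zero]
          exact (Set.ncard_pos (Set.toFinite _)).mpr ⟨p, hpC, hpK'⟩
        have := Set.ncard_le_ncard hsub2 (Set.toFinite _)
        omega

/-- The invariant for the backward direction. -/
lemma inv_preserved {s t : V} {K₁ K₂ : Set (V × V)}
    (h : Relation.ReflTransGen (Step s t) K₁ K₂) :
    kClosure s t K₂ = kClosure s t K₁ ∨ ((∃ v, (v, v) ∈ K₂) ∧ ¬ hasPath K₂ s t) := by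
  induction h with
  | refl => exact Or.inl rfl
  | tail hab hbc ih =>
    rename_i b c
    rcases hbc with hop2 | hop3
    · obtain ⟨a, x, y, haxy, h1, h2, hcase⟩ := hop2
      rcases hcase with rfl | rfl
      · -- addition
        have hiff : ∀ u w, hasPath (b ∪ {(a, y)}) u w ↔ hasPath b u w := by
          intro u w
          constructor
          · apply hasPath_of_edges
            rintro p (hp | hp)
            · exact Relation.TransGen.single hp
            · rw [Set.mem_singleton_iff] at hp
              subst hp
              exact Relation.TransGen.head h1 (Relation.TransGen.single h2)
          · exact hasPath_mono Set.subset_union_left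
        rcases ih with ih | ih
        · exact Or.inl ((kClosure_congr hiff).trans ih)
        · refine Or.inr ⟨⟨ih.1.choose, Set.mem_union_left _ ih.1.choose_spec⟩, ?_⟩
          rw [hiff]
          exact ih.2
      · -- removal
        rcases ih with ih | ih
        · by_cases hw : (a, x) ≠ (a, y) ∧ (x, y) ≠ (a, y)
          · -- both witnesses survive; paths are preserved
            have hiff : ∀ u w, hasPath (b \ {(a, y)}) u w ↔ hasPath b u w := by
              intro u w
              constructor
              · exact hasPath_mono Set.diff_subset
              · apply hasPath_of_edges
                intro p hp
                by_cases hpe : p = (a, y)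
                · subst hpe
                  exact Relation.TransGen.head (a := a) (b := x) ⟨h1, hw.1⟩
                    (Relation.TransGen.single ⟨h2, hw.2⟩)
                · exact Relation.TransGen.single ⟨hp, hpe⟩
            exact Or.inl ((kClosure_congr hiff).trans ih)
          · -- a witness is the removed edge: a self-loop survives
            have hloop : ∃ v, (v, v) ∈ b \ {(a, y)} := by
              rw [not_and_or, not_not, not_not] at hw
              rcases hw with hw | hw
              · have hxy : x = y := congrArg Prod.snd hw
                subst hxy
                refine ⟨x, h2, ?_⟩
                simp only [Set.mem_singleton_iff, Prod.mk.injEq, not_and]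
                intro hax _
                exact haxy hax.symm
              · have hxa : x = a := congrArg Prod.fst hw
                subst hxa
                refine ⟨x, h1, ?_⟩
                simp only [Set.mem_singleton_iff, Prod.mk.injEq, not_and]
                intro _ hxy2
                exact haxy hxy2
            by_cases hp : hasPath (b \ {(a, y)}) s t
            · have hpb : hasPath b s t := hasPath_mono Set.diff_subset hp
              refine Or.inl (((kClosure_of_path hp).trans (kClosure_of_path hpb).symm).trans ih)
            · exact Or.inr ⟨hloop, hp⟩
        · obtain ⟨⟨v, hv⟩, hnp⟩ := ih
          refine Or.inr ⟨⟨v, hv, ?_⟩, fun hp => hnp (hasPath_mono Set.diff_subset hp)⟩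
          simp only [Set.mem_singleton_iff, Prod.mk.injEq, not_and]
          intro h1' h2'
          exact haxy (h1'.symm.trans h2')
    · obtain ⟨hstb, e, he, hcase⟩ := hop3
      have hpb : hasPath b s t := Relation.TransGen.single hstb
      rcases ih with ih | ih
      · have hstc : (s, t) ∈ c := by
          rcases hcase with rfl | rfl
          · exact Set.mem_union_left _ hstb
          · exact ⟨hstb, fun h => he h.symm⟩
        have hpc : hasPath c s t := Relation.TransGen.single hstc
        exact Or.inl (((kClosure_of_path hpc).trans (kClosure_of_path hpb).symm).trans ih)
      · exact absurd hpb ih.2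

end Aux

theorem stmt16 {V : Type*} [Fintype V] (s t : V) (hst : s ≠ t)
    (K₁ K₂ : Set (V × V)) (hK₁ : ∀ p ∈ K₁, p.1 ≠ p.2) (hK₂ : ∀ p ∈ K₂, p.1 ≠ p.2) :
    kClosure s t K₁ = kClosure s t K₂ ↔
      Relation.ReflTransGen (fun K K' => Op2 K K' ∨ Op3 s t K K') K₁ K₂ := by
  constructor
  · intro hC
    show Relation.ReflTransGen (Step s t) K₁ K₂
    by_cases hp1 : hasPath K₁ s t
    · have hp2 : hasPath K₂ s t := by
        have hmem : (s, t) ∈ kClosure s t K₂ := hC ▸ (⟨hst, Or.inl hp1⟩ : (s, t) ∈ kClosure s t K₁)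
        rcases hmem.2 with h | h
        · exact h
        · exact h
      obtain ⟨L₁, hR1, hmem1, -, -⟩ := reach_add_path s t hp1 hst
      obtain ⟨L₂, hR2, hmem2, -, -⟩ := reach_add_path s t hp2 hst
      exact (rel2_trans hR1 (rel2_trans (rel2_op3_target hmem1 hmem2) (rel2_symm hR2))).1
    · have hp2 : ¬ hasPath K₂ s t := by
        intro hp2
        have hmem : (s, t) ∈ kClosure s t K₁ := hC ▸ (⟨hst, Or.inl hp2⟩ : (s, t) ∈ kClosure s t K₂)
        rcases hmem.2 with h | h
        · exact hp1 h
        · exact hp1 h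
      have h1 := rel2_to_closure hK₁ hp1
      have h2 := rel2_to_closure hK₂ hp2
      rw [hC] at h1
      exact (rel2_trans h1 (rel2_symm h2)).1
  · intro h
    have h' : Relation.ReflTransGen (Step s t) K₁ K₂ := h
    rcases inv_preserved h' with h | h
    · exact h.symm
    · obtain ⟨⟨v, hv⟩, -⟩ := h
      exact absurd rfl (hK₂ (v, v) hv)
end

section
/- In the monotone switching network G' shown in Theorem 1 (Section 2, easy inputs), the constructed certain-knowledge switching network built by choosing an ordering v₁,…,v_{N−2} of V(G)\{s,t} and taking knowledge-set vertices K_{V_i} with V_i = {v₁,…,v_i} accepts any input graph G(P,V₀,L,∅,φ) (path P of length k+1 from s to t mapped via φ onto V₀, plus the edges s → v for all v ∈ L) whose path vertices appear in increasing order in the chosen ordering. In particular a uniformly random ordering accepts any fixed such input with probability at least 1/k!. -/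
open scoped Classical

section Aux

variable {M k : ℕ}

noncomputable def pset (g : Fin k → Fin M) (τ : Equiv.Perm (Fin M)) : Finset (Fin M) :=
  Finset.univ.image (fun i => τ.symm (g i))

lemma pset_card (g : Fin k → Fin M) (hg : Function.Injective g) (τ : Equiv.Perm (Fin M)) :
    (pset g τ).card = k := by
  rw [pset, show (fun i => τ.symm (g i)) = (⇑τ.symm ∘ g) from rfl,
    Finset.card_image_of_injective _ (τ.symm.injective.comp hg), Finset.card_univ,
    Fintype.card_fin]

noncomputable def piso (g : Fin k → Fin M) (hg : Function.Injective g) (τ : Equiv.Perm (Fin M)) :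
    Fin k ≃o {x // x ∈ pset g τ} := (pset g τ).orderIsoOfFin (pset_card g hg τ)

noncomputable def menum (g : Fin k → Fin M) (hg : Function.Injective g) (τ : Equiv.Perm (Fin M)) :
    Fin k → Fin M := fun i => (piso g hg τ i : Fin M)

lemma menum_strictMono (g : Fin k → Fin M) (hg : Function.Injective g) (τ : Equiv.Perm (Fin M)) :
    StrictMono (menum g hg τ) := fun a b hab => Subtype.coe_lt_coe.mpr ((piso g hg τ).strictMono hab)

noncomputable def sortFun (g : Fin k → Fin M) (hg : Function.Injective g)
    (τ : Equiv.Perm (Fin M)) : Fin M → Fin M :=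
  fun x => if hx : x ∈ pset g τ then g ((piso g hg τ).symm ⟨x, hx⟩) else τ x

lemma sortFun_menum (g : Fin k → Fin M) (hg : Function.Injective g) (τ : Equiv.Perm (Fin M))
    (i : Fin k) : sortFun g hg τ (menum g hg τ i) = g i := by
  have hx : menum g hg τ i ∈ pset g τ := (piso g hg τ i).2
  rw [sortFun, dif_pos hx]
  congr 1
  have : (⟨menum g hg τ i, hx⟩ : {x // x ∈ pset g τ}) = piso g hg τ i := Subtype.ext rfl
  rw [this, OrderIso.symm_apply_apply]

lemma mem_pset_iff_menum (g : Fin k → Fin M) (hg : Function.Injective g)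
    (τ : Equiv.Perm (Fin M)) (x : Fin M) : x ∈ pset g τ ↔ ∃ i, menum g hg τ i = x := by
  constructor
  · intro hx
    exact ⟨(piso g hg τ).symm ⟨x, hx⟩, by
      simp [menum, OrderIso.apply_symm_apply]⟩
  · rintro ⟨i, rfl⟩
    exact (piso g hg τ i).2

lemma sortFun_not_mem (g : Fin k → Fin M) (hg : Function.Injective g) (τ : Equiv.Perm (Fin M))
    {x : Fin M} (hx : x ∉ pset g τ) : sortFun g hg τ x = τ x := dif_neg hx

lemma mem_pset_of_tau_eq (g : Fin k → Fin M) (τ : Equiv.Perm (Fin M)) {x : Fin M} {i : Fin k}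
    (h : τ x = g i) : x ∈ pset g τ := by
  rw [pset, Finset.mem_image]
  exact ⟨i, Finset.mem_univ i, by rw [← h, Equiv.symm_apply_apply]⟩

lemma sortFun_injective (g : Fin k → Fin M) (hg : Function.Injective g)
    (τ : Equiv.Perm (Fin M)) : Function.Injective (sortFun g hg τ) := by
  intro x y hxy
  simp only [sortFun] at hxy
  by_cases hx : x ∈ pset g τ <;> by_cases hy : y ∈ pset g τ
  · rw [dif_pos hx, dif_pos hy] at hxy
    have := (piso g hg τ).symm.injective (hg hxy)
    exact congrArg Subtype.val this
  · rw [dif_pos hx, dif_neg hy] at hxy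
    exact absurd (mem_pset_of_tau_eq g τ hxy.symm) hy
  · rw [dif_neg hx, dif_pos hy] at hxy
    exact absurd (mem_pset_of_tau_eq g τ hxy) hx
  · rw [dif_neg hx, dif_neg hy] at hxy
    exact τ.injective hxy

noncomputable def sortPerm (g : Fin k → Fin M) (hg : Function.Injective g)
    (τ : Equiv.Perm (Fin M)) : Equiv.Perm (Fin M) :=
  Equiv.ofBijective _ (Finite.injective_iff_bijective.mp (sortFun_injective g hg τ))

lemma sortPerm_apply (g : Fin k → Fin M) (hg : Function.Injective g) (τ : Equiv.Perm (Fin M))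
    (x : Fin M) : sortPerm g hg τ x = sortFun g hg τ x := rfl

noncomputable def pifun (g : Fin k → Fin M) (hg : Function.Injective g)
    (τ : Equiv.Perm (Fin M)) : Fin k → Fin k :=
  fun i => (piso g hg τ).symm ⟨τ.symm (g i), by
    rw [pset, Finset.mem_image]; exact ⟨i, Finset.mem_univ i, rfl⟩⟩

lemma pifun_injective (g : Fin k → Fin M) (hg : Function.Injective g) (τ : Equiv.Perm (Fin M)) :
    Function.Injective (pifun g hg τ) := by
  intro i j hij
  have := (piso g hg τ).symm.injective hij
  have := congrArg Subtype.val this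
  exact hg (τ.symm.injective this)

lemma menum_pifun (g : Fin k → Fin M) (hg : Function.Injective g) (τ : Equiv.Perm (Fin M))
    (i : Fin k) : menum g hg τ (pifun g hg τ i) = τ.symm (g i) := by
  simp [menum, pifun, OrderIso.apply_symm_apply]

lemma pset_eq_filter (g : Fin k → Fin M) (hg : Function.Injective g) (τ : Equiv.Perm (Fin M)) :
    pset g τ = Finset.univ.filter (fun x => ∃ i, sortFun g hg τ x = g i) := by
  ext x
  simp only [Finset.mem_filter, Finset.mem_univ, true_and]
  constructor
  · intro hx
    exact ⟨(piso g hg τ).symm ⟨x, hx⟩, by rw [sortFun, dif_pos hx]⟩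
  · rintro ⟨i, hi⟩
    by_contra hx
    rw [sortFun_not_mem g hg τ hx] at hi
    exact hx (mem_pset_of_tau_eq g τ hi)

lemma orderIso_coe_congr {α : Type*} [LinearOrder α] {s s' : Finset α} (h : s = s') {k : ℕ}
    (hs : s.card = k) (hs' : s'.card = k) (i : Fin k) :
    (s.orderIsoOfFin hs i : α) = (s'.orderIsoOfFin hs' i : α) := by subst h; rfl

lemma accept_aux {V : Type*} (s t : V)
    (M : ℕ) (v : Fin M → V)
    (k : ℕ) (hk : 1 ≤ k) (g : Fin k → Fin M)
    (E : V → V → Prop)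
    (hE : ∀ a b : V, E a b ↔
      ((a = s ∧ b = v (g ⟨0, hk⟩)) ∨
        (∃ i : Fin k, ∃ h : (i : ℕ) + 1 < k, a = v (g i) ∧ b = v (g ⟨(i : ℕ) + 1, h⟩)) ∨
        (a = v (g ⟨k - 1, by omega⟩) ∧ b = t) ∨
        (a = s ∧ ∃ j : Fin M, b = v j ∧ ∀ i : Fin k, g i ≠ j)))
    (m : Fin k → Fin M) (hm : StrictMono m) (σ : Fin M → Fin M)
    (h1 : ∀ i, σ (m i) = g i)
    (h2 : ∀ x : Fin M, (∀ i, m i ≠ x) → ∀ i, g i ≠ σ x) :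
    (∀ i : Fin M, E s (v (σ i)) ∨ ∃ j : Fin M, j < i ∧ E (v (σ j)) (v (σ i))) ∧
      ∃ i : Fin M, E (v (σ i)) t := by
  constructor
  · intro x
    by_cases hx : ∃ j : Fin k, m j = x
    · obtain ⟨j, hj⟩ := hx
      rcases Nat.eq_zero_or_pos (j : ℕ) with h0 | hpos
      · left
        rw [hE]
        refine Or.inl ⟨rfl, ?_⟩
        have hj0 : j = ⟨0, hk⟩ := Fin.ext h0
        rw [← hj, h1, hj0]
      · right
        have hlt : (j : ℕ) - 1 + 1 < k := by omega
        have hjlt : (j : ℕ) - 1 < k := by omega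
        have hjj : (⟨(j : ℕ) - 1 + 1, hlt⟩ : Fin k) = j := Fin.ext (by simp; omega)
        refine ⟨m ⟨(j : ℕ) - 1, hjlt⟩, ?_, ?_⟩
        · rw [← hj]
          apply hm
          rw [Fin.lt_def]
          simp
          omega
        · rw [hE]
          refine Or.inr (Or.inl ⟨⟨(j : ℕ) - 1, hjlt⟩, hlt, ?_, ?_⟩)
          · rw [h1]
          · rw [← hj, h1, hjj]
    · push_neg at hx
      left
      rw [hE]
      exact Or.inr (Or.inr (Or.inr ⟨rfl, σ x, rfl, h2 x hx⟩))
  · refine ⟨m ⟨k - 1, by omega⟩, ?_⟩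
    rw [hE]
    exact Or.inr (Or.inr (Or.inl ⟨by rw [h1], rfl⟩))

end Aux

/-- The certain-knowledge switching network built from an ordering `v₁, …, v_M` of
`V(G) \ {s,t}` (with knowledge-set vertices `K_{V_i}`, `V_i = {v₁,…,v_i}`) accepts an input
graph `G(P, V₀, L, ∅, φ)` — a path `s → w₁ → ⋯ → w_k → t` on the vertices `v (g 0), …,
v (g (k-1))` together with all edges `s → v` for `v ∈ L` (the non-path vertices) —
whenever the path vertices appear in increasing order in the ordering (`StrictMono g`):
each step `K_{V_{i-1}} → K_{V_i}` can be made with an edge `s → v_i` of `G` or an edge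
`v_j → v_i` of `G` with `j < i`, and there is a final edge of `G` into `t`.
Moreover, a uniformly random ordering accepts any fixed such input with probability at
least `1/k!`: the number of permutations `σ` for which the reordered network `v ∘ σ`
accepts is at least `M!/k!`. -/
theorem stmt17 {V : Type*} [Fintype V] [DecidableEq V] (s t : V) (hst : s ≠ t)
    (M : ℕ) (hM : Fintype.card V = M + 2)
    (v : Fin M → V) (hvinj : Function.Injective v)
    (hvs : ∀ i, v i ≠ s) (hvt : ∀ i, v i ≠ t)
    (k : ℕ) (hk : 1 ≤ k) (g : Fin k → Fin M) (hginj : Function.Injective g)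
    (E : V → V → Prop)
    (hE : ∀ a b : V, E a b ↔
      ((a = s ∧ b = v (g ⟨0, hk⟩)) ∨
        (∃ i : Fin k, ∃ h : (i : ℕ) + 1 < k, a = v (g i) ∧ b = v (g ⟨(i : ℕ) + 1, h⟩)) ∨
        (a = v (g ⟨k - 1, by omega⟩) ∧ b = t) ∨
        (a = s ∧ ∃ j : Fin M, b = v j ∧ ∀ i : Fin k, g i ≠ j))) :
    (StrictMono g →
      (∀ i : Fin M, E s (v i) ∨ ∃ j : Fin M, j < i ∧ E (v j) (v i)) ∧
        ∃ i : Fin M, E (v i) t) ∧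
      Nat.factorial k *
          (Finset.univ.filter (fun σ : Equiv.Perm (Fin M) =>
            (∀ i : Fin M, E s (v (σ i)) ∨ ∃ j : Fin M, j < i ∧ E (v (σ j)) (v (σ i))) ∧
              ∃ i : Fin M, E (v (σ i)) t)).card ≥
        Nat.factorial M := by
  constructor
  · intro hg
    exact accept_aux s t M v k hk g E hE g hg id (fun i => rfl) (fun x hx => hx)
  · set good := Finset.univ.filter (fun σ : Equiv.Perm (Fin M) =>
      (∀ i : Fin M, E s (v (σ i)) ∨ ∃ j : Fin M, j < i ∧ E (v (σ j)) (v (σ i))) ∧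
        ∃ i : Fin M, E (v (σ i)) t) with hgood
    have hmain : (Finset.univ : Finset (Equiv.Perm (Fin M))).card ≤
        (good ×ˢ (Finset.univ : Finset (Fin k ↪ Fin k))).card := by
      apply Finset.card_le_card_of_injOn
        (fun τ => (sortPerm g hginj τ, ⟨pifun g hginj τ, pifun_injective g hginj τ⟩))
      · intro τ _
        rw [Finset.mem_coe, Finset.mem_product]
        refine ⟨?_, Finset.mem_univ _⟩
        rw [hgood, Finset.mem_filter]
        refine ⟨Finset.mem_univ _, ?_⟩
        exact accept_aux s t M v k hk g E hE (menum g hginj τ) (menum_strictMono g hginj τ)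
          (sortFun g hginj τ) (sortFun_menum g hginj τ)
          (fun x hx i hgi => by
            have hxmem : x ∉ pset g τ := by
              rw [mem_pset_iff_menum g hginj]
              push_neg
              exact hx
            rw [sortFun_not_mem g hginj τ hxmem] at hgi
            exact hxmem (mem_pset_of_tau_eq g τ hgi.symm))
      · intro τ _ τ' _ h
        simp only [Prod.mk.injEq] at h
        obtain ⟨hσ, hπ⟩ := h
        have hfun : ∀ x, sortFun g hginj τ x = sortFun g hginj τ' x := by
          intro x
          have := congrArg (fun (e : Equiv.Perm (Fin M)) => e x) hσ
          simpa [sortPerm_apply] using this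
        have hps : pset g τ = pset g τ' := by
          rw [pset_eq_filter g hginj τ, pset_eq_filter g hginj τ']
          apply Finset.filter_congr
          intro x _
          simp [hfun x]
        have hπfun : ∀ i, pifun g hginj τ i = pifun g hginj τ' i := by
          intro i
          have := congrArg (fun (e : Fin k ↪ Fin k) => e i) hπ
          simpa using this
        have hmen : ∀ i, menum g hginj τ i = menum g hginj τ' i := by
          intro i
          exact orderIso_coe_congr hps _ _ i
        have hsymm : ∀ i, τ.symm (g i) = τ'.symm (g i) := by
          intro i
          rw [← menum_pifun g hginj τ i, ← menum_pifun g hginj τ' i, hπfun i, hmen]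
        apply Equiv.ext
        intro x
        by_cases hx : x ∈ pset g τ
        · rw [pset, Finset.mem_image] at hx
          obtain ⟨i, _, hi⟩ := hx
          have h1 : τ x = g i := by rw [← hi, Equiv.apply_symm_apply]
          have h2 : τ' x = g i := by rw [← hi, hsymm i, Equiv.apply_symm_apply]
          rw [h1, h2]
        · have hx' : x ∉ pset g τ' := hps ▸ hx
          rw [← sortFun_not_mem g hginj τ hx, ← sortFun_not_mem g hginj τ' hx', hfun x]
    rw [Finset.card_product, Finset.card_univ, Finset.card_univ, Fintype.card_perm,
      Fintype.card_fin, Fintype.card_embedding_eq, Fintype.card_fin,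
      Nat.descFactorial_self] at hmain
    calc Nat.factorial M ≤ good.card * Nat.factorial k := hmain
    _ = Nat.factorial k * good.card := Nat.mul_comm _ _
end
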